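/- Let g ∈ Mon(X) with ℓ(g) = n, and let L : Fact(G,g,I) → Comp(ℤ,n,I) be the map sending (x_L, x_1, …, x_k, x_R) to (ℓ(x_L), ℓ(x_1), …, ℓ(x_k), ℓ(x_R)). For every x ∈ Fact(G,g,I), L restricts to an order isomorphism from the lower set ↓(x) = {y ∈ Fact(G,g,I) : y ≤ x} onto the lower set ↓(L(x)) = {b ∈ Comp(ℤ,n,I) : b ≤ L(x)}. -/

import Mathlib

noncomputable def wlen {G : Type*} [Group G] (X : Set G) (g : G) : ℕ :=
  sInf {n | ∃ l : List G, l.length = n ∧ (∀ x ∈ l, x ∈ X) ∧ l.prod = g}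

/-- A linear factorization `(x_L, x₁, …, x_k, x_R)` of `g`, encoded as a triple. -/
def IsLinFact {G : Type*} [Group G] (X : Set G) (g : G) (p : G × List G × G) : Prop :=
  p.1 ∈ Submonoid.closure X ∧ p.2.2 ∈ Submonoid.closure X ∧
    (∀ a ∈ p.2.1, a ∈ Submonoid.closure X ∧ a ≠ 1) ∧
    p.1 * p.2.1.prod * p.2.2 = g ∧
    wlen X p.1 + (p.2.1.map (wlen X)).sum + wlen X p.2.2 = wlen X g

/-- A single merge of two consecutive entries of a linear factorization. -/
inductive MergeStep {G : Type*} [Group G] : G × List G × G → G × List G × G → Prop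
  | left (xL a : G) (l : List G) (xR : G) :
      MergeStep (xL * a, l, xR) (xL, a :: l, xR)
  | mid (xL : G) (l₁ : List G) (a b : G) (l₂ : List G) (xR : G) :
      MergeStep (xL, l₁ ++ (a * b) :: l₂, xR) (xL, l₁ ++ a :: b :: l₂, xR)
  | right (xL : G) (l : List G) (a xR : G) :
      MergeStep (xL, l, a * xR) (xL, l ++ [a], xR)

def FactLE {G : Type*} [Group G] : G × List G × G → G × List G × G → Prop :=
  Relation.ReflTransGen MergeStep

/-- A linear composition of `n` (an element of `Comp(ℤ,n,I)`). -/
def IsComp (n : ℕ) (p : ℕ × List ℕ × ℕ) : Prop :=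
  (∀ a ∈ p.2.1, 0 < a) ∧ p.1 + p.2.1.sum + p.2.2 = n

/-- A single merge of two consecutive entries of a composition. -/
inductive CMergeStep : ℕ × List ℕ × ℕ → ℕ × List ℕ × ℕ → Prop
  | left (aL a : ℕ) (l : List ℕ) (aR : ℕ) :
      CMergeStep (aL + a, l, aR) (aL, a :: l, aR)
  | mid (aL : ℕ) (l₁ : List ℕ) (a b : ℕ) (l₂ : List ℕ) (aR : ℕ) :
      CMergeStep (aL, l₁ ++ (a + b) :: l₂, aR) (aL, l₁ ++ a :: b :: l₂, aR)
  | right (aL : ℕ) (l : List ℕ) (a aR : ℕ) :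
      CMergeStep (aL, l, a + aR) (aL, l ++ [a], aR)

def CompLE : ℕ × List ℕ × ℕ → ℕ × List ℕ × ℕ → Prop :=
  Relation.ReflTransGen CMergeStep

/-- The map `L` recording the lengths of the entries of a linear factorization. -/
noncomputable def Lmap {G : Type*} [Group G] (X : Set G) (p : G × List G × G) :
    ℕ × List ℕ × ℕ :=
  (wlen X p.1, p.2.1.map (wlen X), wlen X p.2.2)

/-! ### Auxiliary machinery -/

open List Relation

set_option linter.translateGenerateName false

namespace Stmt3Aux

/-! #### Sequences of triples -/

def tseq {α : Type*} (p : α × List α × α) : List α := p.1 :: (p.2.1 ++ [p.2.2])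

lemma tseq_injective {α : Type*} : Function.Injective (tseq (α := α)) := by
  rintro ⟨a, l, b⟩ ⟨c, m, d⟩ h
  simp only [tseq, List.cons.injEq] at h
  obtain ⟨h1, h2⟩ := h
  obtain ⟨h3, h4⟩ := List.append_inj' h2 rfl
  simp only [List.cons.injEq] at h4
  simp_all

lemma exists_tseq {α : Type*} {l : List α} (h : 2 ≤ l.length) : ∃ p, tseq p = l := by
  match l with
  | [] => simp at h
  | [a] => simp at h
  | a :: b :: t =>
      have hne : (b :: t) ≠ [] := by simp
      exact ⟨(a, (b :: t).dropLast, (b :: t).getLast hne), by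
        simp only [tseq, List.dropLast_append_getLast hne]⟩

lemma length_tseq {α : Type*} (p : α × List α × α) : 2 ≤ (tseq p).length := by
  simp [tseq]

lemma tseq_prod {M : Type*} [Monoid M] (p : M × List M × M) :
    (tseq p).prod = p.1 * p.2.1.prod * p.2.2 := by
  simp [tseq, mul_assoc]

lemma tseq_sum (p : ℕ × List ℕ × ℕ) :
    (tseq p).sum = p.1 + p.2.1.sum + p.2.2 := by
  simp [tseq]; omega

/-! #### List merges and groupings -/

@[to_additive LAddMerge]
def LMerge {M : Type*} [Monoid M] (y z : List M) : Prop :=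
  ∃ l₁ a b l₂, z = l₁ ++ a :: b :: l₂ ∧ y = l₁ ++ (a * b) :: l₂

@[to_additive laddmerge_cons]
lemma LMerge.cons {M : Type*} [Monoid M] {y z : List M} (c : M) (h : LMerge y z) :
    LMerge (c :: y) (c :: z) := by
  obtain ⟨l₁, a, b, l₂, hz, hy⟩ := h
  exact ⟨c :: l₁, a, b, l₂, by simp [hz], by simp [hy]⟩

@[to_additive rtg_laddmerge_cons]
lemma rtg_lmerge_cons {M : Type*} [Monoid M] {y z : List M} (c : M)
    (h : ReflTransGen LMerge y z) : ReflTransGen LMerge (c :: y) (c :: z) :=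
  ReflTransGen.lift (c :: ·) (fun _ _ h => LMerge.cons c h) _ _ h

@[to_additive rtg_sum_block]
lemma rtg_prod_block {M : Type*} [Monoid M] :
    ∀ (b : List M), b ≠ [] → ∀ (m : List M),
      ReflTransGen LMerge (b.prod :: m) (b ++ m) := by
  intro b
  induction b with
  | nil => intro h; exact absurd rfl h
  | cons a t IH =>
      intro _ m
      rcases eq_or_ne t [] with rfl | ht
      · simp only [List.prod_cons, List.prod_nil, mul_one, List.cons_append, List.nil_append]
        exact ReflTransGen.refl
      · have h1 : LMerge ((a :: t).prod :: m) (a :: t.prod :: m) :=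
          ⟨[], a, t.prod, m, by simp, by simp⟩
        have h2 : ReflTransGen LMerge (a :: t.prod :: m) (a :: (t ++ m)) :=
          rtg_lmerge_cons a (IH ht m)
        exact ReflTransGen.head h1 (by simpa using h2)

@[to_additive addgrp_to_rtg]
lemma grp_to_rtg {M : Type*} [Monoid M] :
    ∀ (P : List (List M)), (∀ b ∈ P, b ≠ []) →
      ReflTransGen LMerge (P.map List.prod) P.flatten := by
  intro P
  induction P with
  | nil =>
      intro _
      simp only [List.map_nil, List.flatten_nil]
      exact ReflTransGen.refl
  | cons b P' IH =>
      intro h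
      have h1 : ReflTransGen LMerge (b.prod :: P'.map List.prod) (b.prod :: P'.flatten) :=
        rtg_lmerge_cons _ (IH (fun c hc => h c (by simp [hc])))
      have h2 : ReflTransGen LMerge (b.prod :: P'.flatten) (b ++ P'.flatten) :=
        rtg_prod_block b (h b (by simp)) _
      simpa using h1.trans h2

lemma singleton_flatten {α : Type*} (l : List α) :
    (l.map fun a => [a]).flatten = l := by
  induction l with
  | nil => rfl
  | cons a t IH => simp [IH]

@[to_additive singleton_map_sum]
lemma singleton_map_prod {M : Type*} [Monoid M] (l : List M) :
    (l.map fun a => [a]).map List.prod = l := by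
  induction l with
  | nil => rfl
  | cons a t IH => simp [IH]

@[to_additive laddmerge_to_grp]
lemma lmerge_to_grp {M : Type*} [Monoid M] {y z : List M} (h : LMerge y z) :
    ∃ P : List (List M), P.flatten = z ∧ P.map List.prod = y ∧ ∀ b ∈ P, b ≠ [] := by
  obtain ⟨l₁, a, b, l₂, hz, hy⟩ := h
  refine ⟨(l₁.map fun a => [a]) ++ [a, b] :: (l₂.map fun a => [a]), ?_, ?_, ?_⟩
  · simp [hz, singleton_flatten]
  · have e1 := singleton_map_prod l₁
    have e2 := singleton_map_prod l₂
    simp only [List.map_append, List.map_cons, e1, e2, hy]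
    simp
  · intro c hc
    simp only [List.mem_append, List.mem_map, List.mem_cons] at hc
    rcases hc with ⟨d, _, rfl⟩ | rfl | ⟨d, _, rfl⟩ <;> simp

lemma split_map_flatten {α β : Type*} {f : α → β} :
    ∀ (Q : List (List β)) (l : List α), Q.flatten = l.map f →
      ∃ Q₀ : List (List α), Q₀.flatten = l ∧ Q = Q₀.map (List.map f) := by
  intro Q
  induction Q with
  | nil =>
      intro l h
      have : l = [] := by
        have := h.symm
        simpa [List.map_eq_nil_iff] using this
      exact ⟨[], by simp [this]⟩
  | cons b Q' IH =>
      intro l h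
      simp only [List.flatten_cons] at h
      obtain ⟨l₁, l₂, rfl, hb, hQ'⟩ := List.map_eq_append_iff.mp h.symm
      obtain ⟨Q₀', h1, h2⟩ := IH l₂ hQ'.symm
      exact ⟨l₁ :: Q₀', by simp [h1], by simp [hb, h2]⟩

lemma flatten_ne_nil' {α : Type*} {b : List (List α)} (hb : b ≠ [])
    (h : ∀ c ∈ b, c ≠ []) : b.flatten ≠ [] := by
  intro hfl
  rcases b with _ | ⟨c, t⟩
  · exact hb rfl
  · exact h c (by simp) (List.flatten_eq_nil_iff.mp hfl c (by simp))

@[to_additive addgrp_compose]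
lemma grp_compose {M : Type*} [Monoid M] {s t u : List M} {P Q : List (List M)}
    (hPf : P.flatten = s) (hPp : P.map List.prod = t)
    (hQf : Q.flatten = t) (hQp : Q.map List.prod = u)
    (hPn : ∀ b ∈ P, b ≠ []) (hQn : ∀ b ∈ Q, b ≠ []) :
    ∃ R : List (List M), R.flatten = s ∧ R.map List.prod = u ∧ ∀ b ∈ R, b ≠ [] := by
  obtain ⟨Q₀, hQ₀f, hQ₀⟩ := split_map_flatten (f := List.prod) Q P (by rw [hQf, hPp])
  refine ⟨Q₀.map List.flatten, ?_, ?_, ?_⟩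
  · rw [← List.flatten_flatten, hQ₀f, hPf]
  · rw [← hQp, hQ₀]
    simp only [List.map_map]
    congr 1
    funext b
    simp [List.prod_flatten]
  · intro c hc
    simp only [List.mem_map] at hc
    obtain ⟨b, hb, rfl⟩ := hc
    refine flatten_ne_nil' ?_ ?_
    · intro hbe
      have : List.map List.prod b ∈ Q := by rw [hQ₀]; exact List.mem_map_of_mem hb
      exact hQn _ this (by simp [hbe])
    · intro c hcb
      exact hPn c (by rw [← hQ₀f]; exact List.mem_flatten.mpr ⟨b, hb, hcb⟩)

@[to_additive rtg_to_addgrp]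
lemma rtg_to_grp {M : Type*} [Monoid M] {u v : List M}
    (h : ReflTransGen LMerge u v) :
    ∃ P : List (List M), P.flatten = v ∧ P.map List.prod = u ∧ ∀ b ∈ P, b ≠ [] := by
  induction h with
  | refl =>
      refine ⟨u.map fun a => [a], by simp [singleton_flatten], singleton_map_prod u, ?_⟩
      intro b hb; simp only [List.mem_map] at hb; obtain ⟨a, _, rfl⟩ := hb; simp
  | tail hub hstep IH =>
      obtain ⟨Q, hQf, hQp, hQn⟩ := IH
      obtain ⟨P, hPf, hPp, hPn⟩ := lmerge_to_grp hstep
      exact grp_compose hPf hPp hQf hQp hPn hQn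

/-! #### Basic properties of `wlen` -/

variable {G : Type*} [Group G] {X : Set G}

lemma wlen_le {l : List G} {a : G} (hmem : ∀ x ∈ l, x ∈ X) (hprod : l.prod = a) :
    wlen X a ≤ l.length :=
  Nat.sInf_le ⟨l, rfl, hmem, hprod⟩

lemma wlen_spec {a : G} (ha : a ∈ Submonoid.closure X) :
    ∃ l : List G, (∀ x ∈ l, x ∈ X) ∧ l.prod = a ∧ l.length = wlen X a := by
  obtain ⟨l, hl, hp⟩ := Submonoid.exists_list_of_mem_closure ha
  have hne : {n | ∃ l : List G, l.length = n ∧ (∀ x ∈ l, x ∈ X) ∧ l.prod = a}.Nonempty :=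
    ⟨l.length, l, rfl, hl, hp⟩
  obtain ⟨m, hmlen, hmmem, hmprod⟩ := Nat.sInf_mem hne
  exact ⟨m, hmmem, hmprod, hmlen⟩

lemma wlen_one : wlen X (1 : G) = 0 :=
  Nat.le_zero.mp (wlen_le (l := []) (by simp) (by simp))

lemma wlen_pos {a : G} (ha : a ∈ Submonoid.closure X) (hne : a ≠ 1) : 0 < wlen X a := by
  rcases Nat.eq_zero_or_pos (wlen X a) with h0 | h
  · obtain ⟨l, _, hp, hlen⟩ := wlen_spec ha
    rw [h0] at hlen
    rw [List.length_eq_zero_iff] at hlen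
    subst hlen
    simp at hp
    exact absurd hp.symm hne
  · exact h

lemma wlen_mul_le {a b : G} (ha : a ∈ Submonoid.closure X) (hb : b ∈ Submonoid.closure X) :
    wlen X (a * b) ≤ wlen X a + wlen X b := by
  obtain ⟨la, hla, hpa, hna⟩ := wlen_spec ha
  obtain ⟨lb, hlb, hpb, hnb⟩ := wlen_spec hb
  have := wlen_le (l := la ++ lb) (a := a * b)
    (by intro x hx; rcases List.mem_append.mp hx with h | h; exacts [hla x h, hlb x h])
    (by rw [List.prod_append, hpa, hpb])
  simpa [hna, hnb] using this

lemma wlen_prod_le {l : List G} (h : ∀ a ∈ l, a ∈ Submonoid.closure X) :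
    l.prod ∈ Submonoid.closure X ∧ wlen X l.prod ≤ (l.map (wlen X)).sum := by
  induction l with
  | nil => exact ⟨one_mem _, by simp [wlen_one]⟩
  | cons a t IH =>
      obtain ⟨hmem, hle⟩ := IH (fun b hb => h b (by simp [hb]))
      have ha := h a (by simp)
      refine ⟨by rw [List.prod_cons]; exact mul_mem ha hmem, ?_⟩
      rw [List.prod_cons, List.map_cons, List.sum_cons]
      exact le_trans (wlen_mul_le ha hmem) (by omega)

lemma map_sum_pointwise {α : Type*} {f g : α → ℕ} :
    ∀ (l : List α), (∀ a ∈ l, f a ≤ g a) → (l.map g).sum ≤ (l.map f).sum →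
      ∀ a ∈ l, f a = g a := by
  intro l
  induction l with
  | nil => intro _ _ a ha; simp at ha
  | cons a t IH =>
      intro hle hsum b hb
      have h1 : f a ≤ g a := hle a (by simp)
      have h2 : (t.map f).sum ≤ (t.map g).sum :=
        List.sum_le_sum (fun i hi => hle i (by simp [hi]))
      simp only [List.map_cons, List.sum_cons] at hsum
      rcases List.mem_cons.mp hb with rfl | hb'
      · omega
      · exact IH (fun c hc => hle c (by simp [hc])) (by omega) b hb'

/-! #### Positivity structure and injectivity of compositions -/

def Phi (s : List ℕ) : Prop := ∀ u e v, s = u ++ e :: v → u ≠ [] → v ≠ [] → 0 < e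

lemma phi_suffix {b t : List ℕ} (h : Phi (b ++ t)) (hb : b ≠ []) : Phi t := by
  intro u e v ht hu hv
  refine h (b ++ u) e v (by rw [ht, List.append_assoc]) ?_ hv
  simp [List.append_eq_nil_iff, hb]

lemma flatten_nil_of_blocks {α : Type*} {Q : List (List α)}
    (hn : ∀ b ∈ Q, b ≠ []) (h : Q.flatten = []) : Q = [] := by
  rcases Q with _ | ⟨c, t⟩
  · rfl
  · exact absurd (List.flatten_eq_nil_iff.mp h c (by simp)) (hn c (by simp))

lemma ninj : ∀ (P Q : List (List ℕ)), P.flatten = Q.flatten →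
    (∀ b ∈ P, b ≠ []) → (∀ b ∈ Q, b ≠ []) →
    P.map List.sum = Q.map List.sum → Phi P.flatten → P = Q := by
  intro P
  induction P with
  | nil =>
      intro Q _ _ _ hsum _
      exact (List.map_eq_nil_iff.mp hsum.symm).symm
  | cons b P' IH =>
      intro Q hflat hPn hQn hsum hphi
      rcases Q with _ | ⟨c, Q'⟩
      · simp at hsum
      simp only [List.map_cons, List.cons.injEq] at hsum
      obtain ⟨hsbc, hsum'⟩ := hsum
      simp only [List.flatten_cons] at hflat hphi
      have hbne : b ≠ [] := hPn b (by simp)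
      have hcne : c ≠ [] := hQn c (by simp)
      have heads : b = c ∧ P'.flatten = Q'.flatten := by
        rcases List.append_eq_append_iff.mp hflat with ⟨e, hce, hPe⟩ | ⟨e, hbe, hQe⟩
        · rcases e with _ | ⟨e₀, e'⟩
          · have hbc : c = b := by rw [hce]; simp
            subst hbc
            exact ⟨rfl, List.append_cancel_left hflat⟩
          · exfalso
            have hsume : e₀ = 0 ∧ e'.sum = 0 := by
              have : c.sum = b.sum + (e₀ :: e').sum := by rw [hce, List.sum_append]
              simp only [List.sum_cons] at this
              omega
            have hdec : b ++ P'.flatten = b ++ e₀ :: (e' ++ Q'.flatten) := by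
              rw [hPe]; simp
            rcases eq_or_ne (e' ++ Q'.flatten) [] with hnil | hni
            · obtain ⟨he', hQ'f⟩ := List.append_eq_nil_iff.mp hnil
              have hQ'nil : Q' = [] :=
                flatten_nil_of_blocks (fun d hd => hQn d (by simp [hd])) hQ'f
              have hP'nil : P' = [] := by
                have := hsum'
                rw [hQ'nil] at this
                exact List.map_eq_nil_iff.mp this
              rw [hP'nil] at hPe
              simp [he'] at hPe
            · have := hphi b e₀ (e' ++ Q'.flatten) hdec hbne hni
              omega
        · rcases e with _ | ⟨e₀, e'⟩
          · have hbc : b = c := by rw [hbe]; simp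
            subst hbc
            exact ⟨rfl, List.append_cancel_left hflat⟩
          · exfalso
            have hsume : e₀ = 0 ∧ e'.sum = 0 := by
              have : b.sum = c.sum + (e₀ :: e').sum := by rw [hbe, List.sum_append]
              simp only [List.sum_cons] at this
              omega
            have hdec : b ++ P'.flatten = c ++ e₀ :: (e' ++ P'.flatten) := by
              rw [hbe]; simp
            rcases eq_or_ne (e' ++ P'.flatten) [] with hnil | hni
            · obtain ⟨he', hP'f⟩ := List.append_eq_nil_iff.mp hnil
              have hP'nil : P' = [] :=
                flatten_nil_of_blocks (fun d hd => hPn d (by simp [hd])) hP'f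
              have hQ'nil : Q' = [] := by
                have := hsum'
                rw [hP'nil] at this
                exact (List.map_eq_nil_iff.mp this.symm)
              rw [hQ'nil] at hQe
              simp [he'] at hQe
            · have := hphi c e₀ (e' ++ P'.flatten) hdec hcne hni
              omega
      obtain ⟨rfl, hflat'⟩ := heads
      have : P' = Q' := IH Q' hflat' (fun d hd => hPn d (by simp [hd]))
        (fun d hd => hQn d (by simp [hd])) hsum'
        (phi_suffix hphi hbne)
      rw [this]

lemma eq_of_flatten_profile {α : Type*} :
    ∀ (P Q : List (List α)), P.flatten = Q.flatten →
      P.map List.length = Q.map List.length → P = Q := by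
  intro P
  induction P with
  | nil =>
      intro Q _ hlen
      exact (List.map_eq_nil_iff.mp hlen.symm).symm
  | cons b P' IH =>
      intro Q hflat hlen
      rcases Q with _ | ⟨c, Q'⟩
      · simp at hlen
      simp only [List.map_cons, List.cons.injEq] at hlen
      simp only [List.flatten_cons] at hflat
      obtain ⟨hbc, hrest⟩ := List.append_inj hflat hlen.1
      rw [hbc, IH Q' hrest hlen.2]

/-! #### Transfer between triple merges and list merges -/

lemma mergeStep_lmerge {p q : G × List G × G} (h : MergeStep p q) :
    LMerge (tseq p) (tseq q) := by
  cases h with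
  | left xL a l xR => exact ⟨[], xL, a, l ++ [xR], by simp [tseq], by simp [tseq]⟩
  | mid xL l₁ a b l₂ xR =>
      exact ⟨xL :: l₁, a, b, l₂ ++ [xR], by simp [tseq], by simp [tseq]⟩
  | right xL l a xR => exact ⟨xL :: l, a, xR, [], by simp [tseq], by simp [tseq]⟩

lemma exists_mergeStep {p : G × List G × G} {l₁ l₂ : List G} {a b : G}
    (h : tseq p = l₁ ++ (a * b) :: l₂) :
    ∃ q, tseq q = l₁ ++ a :: b :: l₂ ∧ MergeStep p q := by
  obtain ⟨pL, pm, pR⟩ := p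
  rcases l₁ with _ | ⟨c, l₁'⟩
  · simp only [tseq, List.nil_append, List.cons.injEq] at h
    obtain ⟨rfl, hrest⟩ := h
    exact ⟨(a, b :: pm, pR), by simp [tseq, ← hrest], MergeStep.left a b pm pR⟩
  · simp only [tseq, List.cons_append, List.cons.injEq] at h
    obtain ⟨rfl, hrest⟩ := h
    rcases List.eq_nil_or_concat l₂ with rfl | ⟨l₂', d, rfl⟩
    · obtain ⟨rfl, h2⟩ := List.append_inj' hrest rfl
      simp only [List.cons.injEq, and_true] at h2
      subst h2
      exact ⟨(pL, pm ++ [a], b), by simp [tseq], MergeStep.right pL pm a b⟩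
    · rw [List.concat_eq_append] at hrest ⊢
      have hrest' : pm ++ [pR] = (l₁' ++ (a * b) :: l₂') ++ [d] := by
        rw [hrest]; simp
      obtain ⟨rfl, h2⟩ := List.append_inj' hrest' rfl
      simp only [List.cons.injEq, and_true] at h2
      subst h2
      exact ⟨(pL, l₁' ++ a :: b :: l₂', pR), by simp [tseq],
        MergeStep.mid pL l₁' a b l₂' pR⟩

lemma factLE_of_rtg {p q : G × List G × G}
    (h : ReflTransGen LMerge (tseq p) (tseq q)) : FactLE p q := by
  have key : ∀ (l : List G) (_ : ReflTransGen LMerge l (tseq q)),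
      ∀ p' : G × List G × G, tseq p' = l → FactLE p' q := by
    intro l hl
    induction hl using Relation.ReflTransGen.head_induction_on with
    | refl =>
        intro p' hp'
        rw [tseq_injective hp']
        exact Relation.ReflTransGen.refl
    | head h' hrest IH =>
        intro p' hp'
        obtain ⟨l₁, a', b', l₂, hc, ha⟩ := h'
        obtain ⟨q', hq', hstep⟩ := exists_mergeStep (p := p') (by rw [hp', ha])
        exact Relation.ReflTransGen.head hstep (IH q' (by rw [hq', ← hc]))
  exact key (tseq p) h p rfl

lemma factLE_rtg {p q : G × List G × G} (h : FactLE p q) :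
    ReflTransGen LMerge (tseq p) (tseq q) :=
  Relation.ReflTransGen.lift tseq (fun _ _ h => mergeStep_lmerge h) _ _ h

lemma cmergeStep_lmerge {p q : ℕ × List ℕ × ℕ} (h : CMergeStep p q) :
    LAddMerge (tseq p) (tseq q) := by
  cases h with
  | left xL a l xR => exact ⟨[], xL, a, l ++ [xR], by simp [tseq], by simp [tseq]⟩
  | mid xL l₁ a b l₂ xR =>
      exact ⟨xL :: l₁, a, b, l₂ ++ [xR], by simp [tseq], by simp [tseq]⟩
  | right xL l a xR => exact ⟨xL :: l, a, xR, [], by simp [tseq], by simp [tseq]⟩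

lemma exists_cmergeStep {p : ℕ × List ℕ × ℕ} {l₁ l₂ : List ℕ} {a b : ℕ}
    (h : tseq p = l₁ ++ (a + b) :: l₂) :
    ∃ q, tseq q = l₁ ++ a :: b :: l₂ ∧ CMergeStep p q := by
  obtain ⟨pL, pm, pR⟩ := p
  rcases l₁ with _ | ⟨c, l₁'⟩
  · simp only [tseq, List.nil_append, List.cons.injEq] at h
    obtain ⟨rfl, hrest⟩ := h
    exact ⟨(a, b :: pm, pR), by simp [tseq, ← hrest], CMergeStep.left a b pm pR⟩
  · simp only [tseq, List.cons_append, List.cons.injEq] at h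
    obtain ⟨rfl, hrest⟩ := h
    rcases List.eq_nil_or_concat l₂ with rfl | ⟨l₂', d, rfl⟩
    · obtain ⟨rfl, h2⟩ := List.append_inj' hrest rfl
      simp only [List.cons.injEq, and_true] at h2
      subst h2
      exact ⟨(pL, pm ++ [a], b), by simp [tseq], CMergeStep.right pL pm a b⟩
    · rw [List.concat_eq_append] at hrest ⊢
      have hrest' : pm ++ [pR] = (l₁' ++ (a + b) :: l₂') ++ [d] := by
        rw [hrest]; simp
      obtain ⟨rfl, h2⟩ := List.append_inj' hrest' rfl
      simp only [List.cons.injEq, and_true] at h2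
      subst h2
      exact ⟨(pL, l₁' ++ a :: b :: l₂', pR), by simp [tseq],
        CMergeStep.mid pL l₁' a b l₂' pR⟩

lemma compLE_of_rtg {p q : ℕ × List ℕ × ℕ}
    (h : ReflTransGen LAddMerge (tseq p) (tseq q)) : CompLE p q := by
  have key : ∀ (l : List ℕ) (_ : ReflTransGen LAddMerge l (tseq q)),
      ∀ p' : ℕ × List ℕ × ℕ, tseq p' = l → CompLE p' q := by
    intro l hl
    induction hl using Relation.ReflTransGen.head_induction_on with
    | refl =>
        intro p' hp'
        rw [tseq_injective hp']
        exact Relation.ReflTransGen.refl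
    | head h' hrest IH =>
        intro p' hp'
        obtain ⟨l₁, a', b', l₂, hc, ha⟩ := h'
        obtain ⟨q', hq', hstep⟩ := exists_cmergeStep (p := p') (by rw [hp', ha])
        exact Relation.ReflTransGen.head hstep (IH q' (by rw [hq', ← hc]))
  exact key (tseq p) h p rfl

lemma compLE_rtg {p q : ℕ × List ℕ × ℕ} (h : CompLE p q) :
    ReflTransGen LAddMerge (tseq p) (tseq q) :=
  Relation.ReflTransGen.lift tseq (fun _ _ h => cmergeStep_lmerge h) _ _ h

lemma factLE_iff_grp {y x : G × List G × G} :
    FactLE y x ↔ ∃ P : List (List G),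
      P.flatten = tseq x ∧ P.map List.prod = tseq y ∧ ∀ b ∈ P, b ≠ [] := by
  constructor
  · intro h; exact rtg_to_grp (factLE_rtg h)
  · rintro ⟨P, hf, hp, hn⟩
    apply factLE_of_rtg
    have := grp_to_rtg P hn
    rwa [hf, hp] at this

lemma compLE_iff_grp {y x : ℕ × List ℕ × ℕ} :
    CompLE y x ↔ ∃ P : List (List ℕ),
      P.flatten = tseq x ∧ P.map List.sum = tseq y ∧ ∀ b ∈ P, b ≠ [] := by
  constructor
  · intro h; exact rtg_to_addgrp (compLE_rtg h)
  · rintro ⟨P, hf, hp, hn⟩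
    apply compLE_of_rtg
    have := addgrp_to_rtg P hn
    rwa [hf, hp] at this

/-! #### The key additivity lemma -/

lemma tseq_Lmap (p : G × List G × G) :
    tseq (Lmap X p) = (tseq p).map (wlen X) := by
  simp [tseq, Lmap]

lemma linfact_mem {g : G} {x : G × List G × G} (hx : IsLinFact X g x) :
    ∀ a ∈ tseq x, a ∈ Submonoid.closure X := by
  intro a ha
  simp only [tseq, List.mem_cons, List.mem_append, List.mem_singleton,
    List.not_mem_nil, or_false] at ha
  rcases ha with rfl | ha | rfl
  · exact hx.1
  · exact (hx.2.2.1 a ha).1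
  · exact hx.2.1

lemma linfact_sum {g : G} {x : G × List G × G} (hx : IsLinFact X g x) :
    ((tseq x).map (wlen X)).sum = wlen X g := by
  have h5 := hx.2.2.2.2
  simp only [tseq, List.map_cons, List.map_append, List.sum_cons, List.sum_append,
    List.map_nil, List.sum_nil, List.map_cons, List.sum_cons]
  omega

lemma key {g : G} {x : G × List G × G} (hx : IsLinFact X g x)
    {P : List (List G)} (hPf : P.flatten = tseq x) :
    ∀ b ∈ P, b.prod ∈ Submonoid.closure X ∧ wlen X b.prod = (b.map (wlen X)).sum := by
  have hmem : ∀ b ∈ P, ∀ a ∈ b, a ∈ Submonoid.closure X := by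
    intro b hb a ha
    exact linfact_mem hx a (by rw [← hPf]; exact List.mem_flatten.mpr ⟨b, hb, ha⟩)
  have hcl : ∀ b ∈ P, b.prod ∈ Submonoid.closure X ∧
      wlen X b.prod ≤ (b.map (wlen X)).sum :=
    fun b hb => wlen_prod_le (hmem b hb)
  have hgsum : (P.map (fun b => (b.map (wlen X)).sum)).sum = wlen X g := by
    rw [← linfact_sum hx, ← hPf, List.map_flatten, List.sum_flatten, List.map_map]
    rfl
  have hglow : wlen X g ≤ (P.map (fun b => wlen X b.prod)).sum := by
    have hgp : (P.map List.prod).prod = g := by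
      rw [← List.prod_flatten, hPf, tseq_prod]
      exact hx.2.2.2.1
    have h1 := wlen_prod_le (l := P.map List.prod)
      (by intro a ha; obtain ⟨c, hc, rfl⟩ := List.mem_map.mp ha; exact (hcl c hc).1)
    rw [hgp] at h1
    calc wlen X g ≤ ((P.map List.prod).map (wlen X)).sum := h1.2
      _ = (P.map (fun b => wlen X b.prod)).sum := by rw [List.map_map]; rfl
  have := map_sum_pointwise (f := fun b => wlen X b.prod)
    (g := fun b => (b.map (wlen X)).sum) P (fun b hb => (hcl b hb).2)
    (by rw [hgsum]; exact hglow)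
  exact fun b hb => ⟨(hcl b hb).1, this b hb⟩

lemma phi_of_linfact {g : G} {x : G × List G × G} (hx : IsLinFact X g x) :
    Phi ((tseq x).map (wlen X)) := by
  intro u e v hdec hu hv
  rcases u with _ | ⟨u₀, u'⟩
  · exact absurd rfl hu
  rcases List.eq_nil_or_concat v with rfl | ⟨v', d, rfl⟩
  · exact absurd rfl hv
  rw [List.concat_eq_append] at hdec
  simp only [tseq, List.map_cons, List.map_append, List.map_nil, List.cons_append,
    List.cons.injEq] at hdec
  obtain ⟨_, h2⟩ := hdec
  have h3 : List.map (wlen X) x.2.1 ++ [wlen X x.2.2] = (u' ++ e :: v') ++ [d] := by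
    rw [h2]; simp
  obtain ⟨h4, _⟩ := List.append_inj' h3 rfl
  have he : e ∈ List.map (wlen X) x.2.1 := by rw [h4]; simp
  obtain ⟨a, ha, rfl⟩ := List.mem_map.mp he
  exact wlen_pos (hx.2.2.1 a ha).1 (hx.2.2.1 a ha).2

lemma main_fwd {g : G} {z y : G × List G × G}
    (hz : IsLinFact X g z) (h : FactLE y z) : CompLE (Lmap X y) (Lmap X z) := by
  obtain ⟨P, hPf, hPp, hPn⟩ := factLE_iff_grp.mp h
  have hkey := key hz hPf
  apply compLE_iff_grp.mpr
  refine ⟨P.map (List.map (wlen X)), ?_, ?_, ?_⟩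
  · rw [← List.map_flatten, hPf, tseq_Lmap]
  · rw [tseq_Lmap, ← hPp, List.map_map, List.map_map]
    exact List.map_congr_left (fun b hb => by simpa using ((hkey b hb).2).symm)
  · intro c hc
    obtain ⟨b, hb, rfl⟩ := List.mem_map.mp hc
    simp [hPn b hb]

end Stmt3Aux

open Stmt3Aux

/-- for every linear factorization `x` of `g` (with `ℓ(g) = n`), the map `L`
restricts to an order isomorphism from the lower set `↓(x)` in `Fact(G,g,I)` onto the lower
set `↓(L(x))` in `Comp(ℤ,n,I)`. -/
theorem stmt3 {G : Type*} [Group G] (X : Set G)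
    (hX : ∀ g x, x ∈ X → g * x * g⁻¹ ∈ X)
    (g : G) (hg : g ∈ Submonoid.closure X)
    (n : ℕ) (hn : wlen X g = n)
    (x : G × List G × G) (hx : IsLinFact X g x) :
    -- `L` maps `↓(x)` into `↓(L(x))`
    (∀ y, IsLinFact X g y → FactLE y x → IsComp n (Lmap X y) ∧ CompLE (Lmap X y) (Lmap X x)) ∧
    -- `L` is order-preserving and order-reflecting on `↓(x)`
    (∀ y z, IsLinFact X g y → IsLinFact X g z → FactLE y x → FactLE z x →
      (FactLE y z ↔ CompLE (Lmap X y) (Lmap X z))) ∧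
    -- `L` is injective on `↓(x)`
    (∀ y z, IsLinFact X g y → IsLinFact X g z → FactLE y x → FactLE z x →
      Lmap X y = Lmap X z → y = z) ∧
    -- `L` maps `↓(x)` onto `↓(L(x))`
    (∀ b, IsComp n b → CompLE b (Lmap X x) →
      ∃ y, IsLinFact X g y ∧ FactLE y x ∧ Lmap X y = b) := by
  refine ⟨?_, ?_, ?_, ?_⟩
  · -- Part 1
    intro y hy hyx
    refine ⟨⟨?_, ?_⟩, main_fwd hx hyx⟩
    · intro a ha
      obtain ⟨c, hc, rfl⟩ := List.mem_map.mp ha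
      exact wlen_pos (hy.2.2.1 c hc).1 (hy.2.2.1 c hc).2
    · show wlen X y.1 + (y.2.1.map (wlen X)).sum + wlen X y.2.2 = n
      rw [hy.2.2.2.2, hn]
  · -- Part 2
    intro y z hy hz hyx hzx
    constructor
    · exact main_fwd hz
    · intro hcomp
      obtain ⟨P, hPf, hPp, hPn⟩ := factLE_iff_grp.mp hyx
      obtain ⟨Q, hQf, hQp, hQn⟩ := factLE_iff_grp.mp hzx
      obtain ⟨D, hDf, hDs, hDn⟩ := rtg_to_addgrp (compLE_rtg hcomp)
      have hkeyP := key hx hPf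
      have hkeyQ := key hx hQf
      have hQNf : (Q.map (List.map (wlen X))).flatten = (tseq x).map (wlen X) := by
        rw [← List.map_flatten, hQf]
      have hQNs : (Q.map (List.map (wlen X))).map List.sum = tseq (Lmap X z) := by
        rw [tseq_Lmap, ← hQp, List.map_map, List.map_map]
        exact List.map_congr_left (fun b hb => by simpa using ((hkeyQ b hb).2).symm)
      have hDf' : D.flatten = (Q.map (List.map (wlen X))).map List.sum := by
        rw [hDf, hQNs]
      obtain ⟨D₀, hD₀f, hD₀⟩ := split_map_flatten D (Q.map (List.map (wlen X))) hDf'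
      obtain ⟨D₁, hD₁f, hD₁⟩ := split_map_flatten D₀ Q hD₀f
      have hPNf : (P.map (List.map (wlen X))).flatten = (tseq x).map (wlen X) := by
        rw [← List.map_flatten, hPf]
      have hPNs : (P.map (List.map (wlen X))).map List.sum = tseq (Lmap X y) := by
        rw [tseq_Lmap, ← hPp, List.map_map, List.map_map]
        exact List.map_congr_left (fun b hb => by simpa using ((hkeyP b hb).2).symm)
      have hR'f : (D₀.map List.flatten).flatten = (tseq x).map (wlen X) := by
        rw [← List.flatten_flatten, hD₀f, hQNf]
      have hR's : (D₀.map List.flatten).map List.sum = tseq (Lmap X y) := by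
        rw [← hDs, hD₀]
        simp only [List.map_map]
        exact List.map_congr_left (fun b hb => by simp [List.sum_flatten])
      have hDn' : ∀ b ∈ D₀, b ≠ [] := by
        intro b hb hbe
        have : List.map List.sum b ∈ D := by rw [hD₀]; exact List.mem_map_of_mem hb
        exact hDn _ this (by simp [hbe])
      have hR'n : ∀ c ∈ D₀.map List.flatten, c ≠ [] := by
        intro c hc
        obtain ⟨b, hb, rfl⟩ := List.mem_map.mp hc
        refine flatten_ne_nil' (hDn' b hb) ?_
        intro d hd
        have hdQN : d ∈ Q.map (List.map (wlen X)) := by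
          rw [← hD₀f]; exact List.mem_flatten.mpr ⟨b, hb, hd⟩
        obtain ⟨e, he, rfl⟩ := List.mem_map.mp hdQN
        simp [hQn e he]
      have hPNn : ∀ c ∈ P.map (List.map (wlen X)), c ≠ [] := by
        intro c hc; obtain ⟨b, hb, rfl⟩ := List.mem_map.mp hc; simp [hPn b hb]
      have hPR : P.map (List.map (wlen X)) = D₀.map List.flatten :=
        ninj _ _ (by rw [hPNf, hR'f]) hPNn hR'n (by rw [hPNs, hR's])
          (by rw [hPNf]; exact phi_of_linfact hx)
      have hD₀D₁ : D₀.map List.flatten = (D₁.map List.flatten).map (List.map (wlen X)) := by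
        rw [hD₁]
        simp only [List.map_map]
        exact List.map_congr_left (fun b hb => by simpa using (List.map_flatten (wlen X) b).symm)
      have hPD₁ : P = D₁.map List.flatten := by
        apply eq_of_flatten_profile
        · rw [hPf, ← List.flatten_flatten, hD₁f, hQf]
        · have e1 : P.map List.length = (P.map (List.map (wlen X))).map List.length := by
            simp [List.map_map]
          have e2 : (D₁.map List.flatten).map List.length =
              ((D₁.map List.flatten).map (List.map (wlen X))).map List.length := by
            simp only [List.map_map]
            exact List.map_congr_left (fun c hc => by simp [Function.comp_def])
          rw [e1, e2, hPR, hD₀D₁]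
      apply factLE_iff_grp.mpr
      refine ⟨D₁.map (List.map List.prod), ?_, ?_, ?_⟩
      · rw [← List.map_flatten, hD₁f, hQp]
      · rw [← hPp, hPD₁]
        simp only [List.map_map]
        exact List.map_congr_left (fun b hb => by simpa using (List.prod_flatten (l := b)).symm)
      · intro c hc
        obtain ⟨b, hb, rfl⟩ := List.mem_map.mp hc
        have hbD : List.map List.sum (List.map (List.map (wlen X)) b) ∈ D := by
          rw [hD₀, hD₁, List.map_map]
          simpa using List.mem_map_of_mem hb
        have hbne : b ≠ [] := by
          intro h0
          rw [h0] at hbD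
          simp only [List.map_nil] at hbD
          exact hDn [] hbD rfl
        simp [hbne]
  · -- Part 3
    intro y z hy hz hyx hzx hL
    obtain ⟨P, hPf, hPp, hPn⟩ := factLE_iff_grp.mp hyx
    obtain ⟨Q, hQf, hQp, hQn⟩ := factLE_iff_grp.mp hzx
    have hkeyP := key hx hPf
    have hkeyQ := key hx hQf
    have hPNs : (P.map (List.map (wlen X))).map List.sum = tseq (Lmap X y) := by
      rw [tseq_Lmap, ← hPp, List.map_map, List.map_map]
      exact List.map_congr_left (fun b hb => by simpa using ((hkeyP b hb).2).symm)
    have hQNs : (Q.map (List.map (wlen X))).map List.sum = tseq (Lmap X z) := by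
      rw [tseq_Lmap, ← hQp, List.map_map, List.map_map]
      exact List.map_congr_left (fun b hb => by simpa using ((hkeyQ b hb).2).symm)
    have hPNn : ∀ c ∈ P.map (List.map (wlen X)), c ≠ [] := by
      intro c hc; obtain ⟨b, hb, rfl⟩ := List.mem_map.mp hc; simp [hPn b hb]
    have hQNn : ∀ c ∈ Q.map (List.map (wlen X)), c ≠ [] := by
      intro c hc; obtain ⟨b, hb, rfl⟩ := List.mem_map.mp hc; simp [hQn b hb]
    have hPNf : (P.map (List.map (wlen X))).flatten = (tseq x).map (wlen X) := by
      rw [← List.map_flatten, hPf]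
    have hQNf : (Q.map (List.map (wlen X))).flatten = (tseq x).map (wlen X) := by
      rw [← List.map_flatten, hQf]
    have hPQ : P.map (List.map (wlen X)) = Q.map (List.map (wlen X)) :=
      ninj _ _ (by rw [hPNf, hQNf]) hPNn hQNn (by rw [hPNs, hQNs, hL])
        (by rw [hPNf]; exact phi_of_linfact hx)
    have hPQ' : P = Q := by
      apply eq_of_flatten_profile
      · rw [hPf, hQf]
      · have e1 : P.map List.length = (P.map (List.map (wlen X))).map List.length := by
          simp [List.map_map]
        have e2 : Q.map List.length = (Q.map (List.map (wlen X))).map List.length := by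
          simp [List.map_map]
        rw [e1, e2, hPQ]
    apply tseq_injective
    rw [← hPp, ← hQp, hPQ']
  · -- Part 4
    intro b hb hcb
    obtain ⟨D, hDf, hDs, hDn⟩ := rtg_to_addgrp (compLE_rtg hcb)
    have hDf' : D.flatten = (tseq x).map (wlen X) := by rw [hDf, tseq_Lmap]
    obtain ⟨D₁, hD₁f, hD₁⟩ := split_map_flatten D (tseq x) hDf'
    have hD₁n : ∀ c ∈ D₁, c ≠ [] := by
      intro c hc h0
      exact hDn _ (by rw [hD₁]; exact List.mem_map_of_mem hc) (by simp [h0])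
    have hkey := key hx hD₁f
    have hlen : (D₁.map List.prod).length = (tseq b).length := by
      rw [← hDs, hD₁]; simp
    obtain ⟨y, hy⟩ := exists_tseq (l := D₁.map List.prod) (by rw [hlen]; exact length_tseq b)
    have hLy : tseq (Lmap X y) = tseq b := by
      rw [tseq_Lmap, hy, ← hDs, hD₁, List.map_map, List.map_map]
      exact List.map_congr_left (fun c hc => by simpa using (hkey c hc).2)
    have hLyb : Lmap X y = b := tseq_injective hLy
    have hment : ∀ a ∈ tseq y, a ∈ Submonoid.closure X := by
      intro a ha
      rw [hy] at ha
      obtain ⟨c, hc, rfl⟩ := List.mem_map.mp ha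
      exact (hkey c hc).1
    have hmid : ∀ a ∈ y.2.1, a ∈ Submonoid.closure X ∧ a ≠ 1 := by
      intro a ha
      refine ⟨hment a (by simp [tseq, ha]), ?_⟩
      have hwa : wlen X a ∈ b.2.1 := by
        rw [← hLyb]
        exact List.mem_map_of_mem ha
      have hpos := hb.1 _ hwa
      intro h1
      rw [h1, wlen_one] at hpos
      omega
    refine ⟨y, ⟨hment y.1 (by simp [tseq]), hment y.2.2 (by simp [tseq]), hmid, ?_, ?_⟩,
      factLE_iff_grp.mpr ⟨D₁, hD₁f, hy.symm, hD₁n⟩, hLyb⟩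
    · rw [← tseq_prod, hy, ← List.prod_flatten, hD₁f, tseq_prod]
      exact hx.2.2.2.1
    · have h1 := tseq_sum (Lmap X y)
      have h2 := tseq_sum b
      rw [hLy] at h1
      have h3 := hb.2
      simp only [Lmap] at h1
      omega
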